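/- arXiv:2001.06341 — 9 statements merged into one kernel-verified Lean document; each statement's English description precedes it below -/
import Mathlib

section
/- Let r ≥ 2 be an integer, and let a, b be integers with 0 ≤ a ≤ b-1 and r·(a+1) ≤ b+1. Then r·∑_{l=0}^{a} C(a,l)·(b+1)^{\underline{l}} ≤ (b+1)·b^{\underline{a}}. -/
lemma sum_rec (a m : ℕ) :
    ∑ l ∈ Finset.range (a + 2), (a+1).choose l * (m+1).descFactorial l
      = ∑ l ∈ Finset.range (a + 1), a.choose l * (m+1).descFactorial l
        + (m+1) * ∑ l ∈ Finset.range (a + 1), a.choose l * m.descFactorial l := by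
  have e1 : ∀ l, (a+1).choose (l+1) * (m+1).descFactorial (l+1)
      = a.choose l * ((m+1) * m.descFactorial l)
        + a.choose (l+1) * ((m+1) * m.descFactorial l) := by
    intro l
    rw [Nat.choose_succ_succ, Nat.succ_descFactorial_succ]
    ring
  have e2 : ∀ l, a.choose (l+1) * (m+1).descFactorial (l+1)
      = a.choose (l+1) * ((m+1) * m.descFactorial l) := by
    intro l
    rw [Nat.succ_descFactorial_succ]
  rw [Finset.sum_range_succ' (fun l => (a+1).choose l * (m+1).descFactorial l) (a+1)]
  simp only [e1, Finset.sum_add_distrib]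
  rw [Finset.sum_range_succ (fun l => a.choose (l+1) * ((m+1) * m.descFactorial l)) a]
  rw [Finset.sum_range_succ' (fun l => a.choose l * (m+1).descFactorial l) a]
  simp only [e2, Nat.choose_succ_self, Nat.choose_zero_right, Nat.descFactorial_zero,
    mul_one, zero_mul, add_zero, one_mul, Finset.mul_sum]
  have e3 : ∀ l, a.choose l * ((m+1) * m.descFactorial l)
      = (m+1) * (a.choose l * m.descFactorial l) := by intro l; ring
  simp only [e3]
  ring

lemma aux (r : ℕ) (hr : 2 ≤ r) :
    ∀ a n, r * (a + 1) ≤ n →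
      r * ∑ l ∈ Finset.range (a + 1), a.choose l * n.descFactorial l
        ≤ (a + r) * n.descFactorial a := by
  intro a
  induction a with
  | zero => intro n hn; simp
  | succ a ih =>
    intro n hn
    have h0 : 2 * (a + 1 + 1) ≤ r * (a + 1 + 1) := Nat.mul_le_mul_right _ hr
    obtain ⟨m, rfl⟩ : ∃ m, n = m + 1 := ⟨n - 1, by omega⟩
    have hr2 : r * (a + 1 + 1) = r * (a + 1) + r := by ring
    have hr3 : r * (a + 1) = r * a + r := by ring
    have hra : 2 * a ≤ r * a := Nat.mul_le_mul_right a hr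
    have h1 := ih (m + 1) (by omega)
    have h2 := ih m (by omega)
    rw [sum_rec]
    have hdesc : (m+1).descFactorial (a+1) = (m+1) * m.descFactorial a :=
      Nat.succ_descFactorial_succ m a
    have hkey : (a + r) * (m+1).descFactorial a ≤ (m + 1) * m.descFactorial a := by
      have h3 : (m+1).descFactorial (a+1) = (m + 1 - a) * (m+1).descFactorial a :=
        Nat.descFactorial_succ (m+1) a
      have h4 : a + r ≤ m + 1 - a := by omega
      calc (a + r) * (m+1).descFactorial a ≤ (m + 1 - a) * (m+1).descFactorial a :=
            Nat.mul_le_mul_right _ h4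
        _ = (m+1) * m.descFactorial a := by rw [← h3, hdesc]
    calc r * (∑ l ∈ Finset.range (a + 1), a.choose l * (m+1).descFactorial l
            + (m+1) * ∑ l ∈ Finset.range (a + 1), a.choose l * m.descFactorial l)
        = r * ∑ l ∈ Finset.range (a + 1), a.choose l * (m+1).descFactorial l
            + (m+1) * (r * ∑ l ∈ Finset.range (a + 1), a.choose l * m.descFactorial l) := by
          ring
      _ ≤ (a + r) * (m+1).descFactorial a + (m+1) * ((a + r) * m.descFactorial a) :=
          Nat.add_le_add h1 (Nat.mul_le_mul_left _ h2)
      _ ≤ (m+1) * m.descFactorial a + (m+1) * ((a + r) * m.descFactorial a) :=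
          Nat.add_le_add_right hkey _
      _ = (a + 1 + r) * ((m+1) * m.descFactorial a) := by ring
      _ = (a + 1 + r) * (m+1).descFactorial (a+1) := by rw [hdesc]

theorem stmt_1 (r a b : ℕ) (hr : 2 ≤ r) (hab : a + 1 ≤ b) (hrab : r * (a + 1) ≤ b + 1) :
    r * ∑ l ∈ Finset.range (a + 1), a.choose l * (b + 1).descFactorial l ≤
      (b + 1) * b.descFactorial a := by
  have h := aux r hr a (b+1) hrab
  have h2 : (a + r) * (b+1).descFactorial a ≤ (b+1) * b.descFactorial a := by
    have hd : (b+1).descFactorial (a+1) = (b + 1 - a) * (b+1).descFactorial a :=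
      Nat.descFactorial_succ (b+1) a
    have hd2 : (b+1).descFactorial (a+1) = (b+1) * b.descFactorial a :=
      Nat.succ_descFactorial_succ b a
    have hle : a + r ≤ b + 1 - a := by
      have hr3 : r * (a + 1) = r * a + r := by ring
      have hra : 2 * a ≤ r * a := Nat.mul_le_mul_right a hr
      omega
    calc (a + r) * (b+1).descFactorial a ≤ (b + 1 - a) * (b+1).descFactorial a :=
          Nat.mul_le_mul_right _ hle
      _ = (b+1) * b.descFactorial a := by rw [← hd, hd2]
  exact h.trans h2
end

section
/- Let r ≥ 2 be an integer and let m, n be natural numbers with 3 < m and r·m ≤ n+1. Then r·∑_{i=2}^{m} C(m,i)·(n-1)^{\underline{m-i}} < C(m,2)·(n-1)^{\underline{m-1}}. -/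
lemma ratio_aux (m d i : ℕ) (hi : 2 ≤ i) (hd : 2 * m ≤ d + 2) :
    3 * (m.choose (i+1) * d.descFactorial (m - (i+1))) ≤
      m.choose i * d.descFactorial (m - i) := by
  rcases le_or_gt m i with h | h
  · rw [Nat.choose_eq_zero_of_lt (by omega)]
    simp
  · rcases le_or_gt (m - (i+1)) d with hdm | hdm
    · have h1 : m - i = (m - (i+1)) + 1 := by omega
      rw [h1, Nat.descFactorial_succ]
      have h2 : m.choose (i+1) * (i+1) = m.choose i * (m - i) :=
        Nat.choose_succ_right_eq m i
      have h3 : m - i ≤ d - (m - (i+1)) := by omega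
      calc 3 * (m.choose (i+1) * d.descFactorial (m - (i+1)))
          ≤ (i+1) * (m.choose (i+1) * d.descFactorial (m - (i+1))) :=
            Nat.mul_le_mul_right _ (by omega)
        _ = (m.choose (i+1) * (i+1)) * d.descFactorial (m - (i+1)) := by ring
        _ = (m.choose i * (m - i)) * d.descFactorial (m - (i+1)) := by rw [h2]
        _ ≤ (m.choose i * (d - (m - (i+1)))) * d.descFactorial (m - (i+1)) :=
            Nat.mul_le_mul_right _ (Nat.mul_le_mul_left _ h3)
        _ = m.choose i * ((d - (m - (i+1))) * d.descFactorial (m - (i+1))) := by ring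
    · rw [Nat.descFactorial_eq_zero_iff_lt.mpr hdm]
      simp

lemma sum_bound (m d N : ℕ) (hN : 2 ≤ N) (hd : 2 * m ≤ d + 2) :
    2 * (∑ i ∈ Finset.Icc 2 N, m.choose i * d.descFactorial (m - i))
      + m.choose N * d.descFactorial (m - N)
    ≤ 3 * (m.choose 2 * d.descFactorial (m - 2)) := by
  induction N, hN using Nat.le_induction with
  | base => rw [Finset.Icc_self, Finset.sum_singleton]; linarith
  | succ N hN ih =>
    rw [Finset.sum_Icc_succ_top (by omega)]
    have h := ratio_aux m d N hN hd
    linarith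

theorem stmt_3 (r m n : ℕ) (hr : 2 ≤ r) (hm : 3 < m) (hmn : r * m ≤ n + 1) :
    r * ∑ i ∈ Finset.Icc 2 m, m.choose i * (n - 1).descFactorial (m - i) <
      m.choose 2 * (n - 1).descFactorial (m - 1) := by
  have h2m : 2 * m ≤ r * m := Nat.mul_le_mul_right m hr
  set d := n - 1 with hdd
  have hd2 : 2 * m ≤ d + 2 := by omega
  have hsum := sum_bound m d m (by omega) hd2
  set S := ∑ i ∈ Finset.Icc 2 m, m.choose i * d.descFactorial (m - i) with hS
  set t2 := m.choose 2 * d.descFactorial (m - 2) with ht2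
  have hS2 : 2 * S ≤ 3 * t2 := le_trans (Nat.le_add_right _ _) hsum
  have hm1 : m - 1 = (m - 2) + 1 := by omega
  have hrhs : m.choose 2 * d.descFactorial (m - 1) = (d - (m - 2)) * t2 := by
    rw [hm1, Nat.descFactorial_succ, ht2]; ring
  have ht2pos : 0 < t2 := by
    apply Nat.mul_pos (Nat.choose_pos (by omega))
    exact Nat.pos_of_ne_zero fun h => by have := Nat.descFactorial_eq_zero_iff_lt.mp h; omega
  have key : 3 * r < 2 * (d - (m - 2)) := by
    obtain ⟨s, rfl⟩ : ∃ s, r = s + 2 := ⟨r - 2, by omega⟩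
    obtain ⟨t, rfl⟩ : ∃ t, m = t + 4 := ⟨m - 4, by omega⟩
    have hx : (s + 2) * (t + 4) = s * t + 4 * s + 2 * t + 8 := by ring
    have hst : 0 ≤ s * t := Nat.zero_le _
    omega
  rw [hrhs]
  have h1 : 2 * (r * S) ≤ 3 * r * t2 := by
    calc 2 * (r * S) = r * (2 * S) := by ring
      _ ≤ r * (3 * t2) := Nat.mul_le_mul_left r hS2
      _ = 3 * r * t2 := by ring
  have h2 : 3 * r * t2 < 2 * ((d - (m - 2)) * t2) := by
    calc 3 * r * t2 < (2 * (d - (m - 2))) * t2 := (Nat.mul_lt_mul_right ht2pos).mpr key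
      _ = 2 * ((d - (m - 2)) * t2) := by ring
  have := lt_of_le_of_lt h1 h2
  omega
end

section
/- Let a, b be natural numbers with 2 < a and 2a ≤ b. Then ∑_{l=0}^{a} C(a,l)·(b+1)^{\underline{l}} < (a+1)·b^{\underline{a}}. -/
theorem stmt_4 (a b : ℕ) (ha : 2 < a) (hab : 2 * a ≤ b) :
    ∑ l ∈ Finset.range (a + 1), a.choose l * (b + 1).descFactorial l <
      (a + 1) * b.descFactorial a := by
  obtain ⟨m, rfl⟩ : ∃ m, a = m + 3 := ⟨a - 3, by omega⟩
  obtain ⟨c, rfl⟩ : ∃ c, b = 2 * m + 6 + c := ⟨b - (2 * m + 6), by omega⟩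
  set b := 2 * m + 6 + c with hb
  set t : ℕ → ℕ := fun l => (m + 3).choose l * (b + 1).descFactorial l with ht
  -- step lemma: terms at least double up to index m+2
  have step : ∀ l, l ≤ m + 1 → 2 * t l ≤ t (l + 1) := by
    intro l hl
    have hcl : 0 < (m + 3).choose l := Nat.choose_pos (by omega)
    have hkey : 2 * (l + 1) ≤ (m + 3 - l) * (b + 1 - l) := by
      calc 2 * (l + 1) ≤ 2 * (b + 1 - l) := by omega
        _ ≤ (m + 3 - l) * (b + 1 - l) := Nat.mul_le_mul_right _ (by omega)
    have hmul : 2 * t l * (l + 1) ≤ t (l + 1) * (l + 1) := by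
      have hc : (m + 3).choose (l + 1) * (l + 1) = (m + 3).choose l * (m + 3 - l) :=
        Nat.choose_succ_right_eq _ _
      have hd : (b + 1).descFactorial (l + 1) = (b + 1 - l) * (b + 1).descFactorial l :=
        Nat.descFactorial_succ _ _
      calc 2 * t l * (l + 1)
          = (2 * (l + 1)) * ((m + 3).choose l * (b + 1).descFactorial l) := by
            simp only [ht]; ring
        _ ≤ ((m + 3 - l) * (b + 1 - l)) * ((m + 3).choose l * (b + 1).descFactorial l) :=
            Nat.mul_le_mul_right _ hkey
        _ = t (l + 1) * (l + 1) := by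
            simp only [ht, hd]
            calc (m + 3 - l) * (b + 1 - l) * ((m + 3).choose l * (b + 1).descFactorial l)
                = ((m + 3).choose l * (m + 3 - l)) * ((b + 1 - l) * (b + 1).descFactorial l) := by
                  ring
              _ = ((m + 3).choose (l + 1) * (l + 1)) * ((b + 1 - l) * (b + 1).descFactorial l) := by
                  rw [hc]
              _ = (m + 3).choose (l + 1) * ((b + 1 - l) * (b + 1).descFactorial l) * (l + 1) := by
                  ring
    exact Nat.le_of_mul_le_mul_right hmul (by omega)
  -- geometric bound: partial sums are at most twice the last term
  have geo : ∀ n, n ≤ m + 2 → ∑ l ∈ Finset.range (n + 1), t l ≤ 2 * t n := by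
    intro n hn
    induction n with
    | zero => simp [Finset.sum_range_one, two_mul]
    | succ k ih =>
      rw [Finset.sum_range_succ]
      have h1 : ∑ l ∈ Finset.range (k + 1), t l ≤ 2 * t k := ih (by omega)
      have h2 : 2 * t k ≤ t (k + 1) := step k (by omega)
      omega
  have hsum : ∑ l ∈ Finset.range (m + 3 + 1), t l ≤ 2 * t (m + 2) + t (m + 3) := by
    rw [Finset.sum_range_succ]
    have h1 : ∑ l ∈ Finset.range (m + 3), t l ≤ 2 * t (m + 2) := geo (m + 2) le_rfl
    omega
  -- compute the top two terms via the common factor D = b.descFactorial (m+1)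
  set D := b.descFactorial (m + 1) with hD
  have hDpos : 0 < D := Nat.pos_of_ne_zero fun h => by
    have := Nat.descFactorial_eq_zero_iff_lt.mp h
    omega
  have e1 : (b + 1).descFactorial (m + 2) = (b + 1) * D := by
    rw [Nat.succ_descFactorial_succ]
  have e2 : (b + 1).descFactorial (m + 3) = (b + 1) * ((m + 5 + c) * D) := by
    rw [Nat.succ_descFactorial_succ, Nat.descFactorial_succ]
    congr 2
    omega
  have e3 : b.descFactorial (m + 3) = (m + 4 + c) * ((m + 5 + c) * D) := by
    rw [Nat.descFactorial_succ, Nat.descFactorial_succ]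
    have h1 : b - (m + 2) = m + 4 + c := by omega
    have h2 : b - (m + 1) = m + 5 + c := by omega
    rw [h1, h2]
  have et2 : t (m + 2) = (m + 3) * ((b + 1) * D) := by
    simp only [ht, e1]
    congr 1
    rw [show (m + 2) = (m + 3) - 1 from rfl, Nat.choose_symm (by omega), Nat.choose_one_right]
  have et3 : t (m + 3) = (b + 1) * ((m + 5 + c) * D) := by
    simp only [ht, e2, Nat.choose_self, one_mul]
  have key : (b + 1) * (2 * (m + 3) + (m + 5 + c)) < (m + 4) * ((m + 4 + c) * (m + 5 + c)) := by
    have expand : (m + 4) * ((m + 4 + c) * (m + 5 + c)) =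
        (2 * m + 6 + c + 1) * (2 * (m + 3) + (m + 5 + c)) +
          (m ^ 3 + 7 * m ^ 2 + 13 * m + 3 + c * (2 * m ^ 2 + 12 * m + 18) + c ^ 2 * (m + 3)) := by
      ring
    rw [hb, expand]
    exact Nat.lt_add_of_pos_right (by positivity)
  have final : 2 * t (m + 2) + t (m + 3) < (m + 3 + 1) * b.descFactorial (m + 3) := by
    rw [et2, et3, e3]
    have lhs_eq : 2 * ((m + 3) * ((b + 1) * D)) + (b + 1) * ((m + 5 + c) * D)
        = ((b + 1) * (2 * (m + 3) + (m + 5 + c))) * D := by ring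
    have rhs_eq : (m + 3 + 1) * ((m + 4 + c) * ((m + 5 + c) * D))
        = ((m + 4) * ((m + 4 + c) * (m + 5 + c))) * D := by ring
    rw [lhs_eq, rhs_eq]
    exact (Nat.mul_lt_mul_right hDpos).mpr key
  have main : ∑ l ∈ Finset.range (m + 3 + 1), t l < (m + 3 + 1) * b.descFactorial (m + 3) :=
    lt_of_le_of_lt hsum final
  simpa only [ht] using main
end

section
/- Let a, b be natural numbers with 2 < a and 2a ≤ b. Then C(a,2)·(b+1)^{\underline{a-2}} < b^{\underline{a}}. -/
theorem stmt_5 (a b : ℕ) (ha : 2 < a) (hab : 2 * a ≤ b) :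
    a.choose 2 * (b + 1).descFactorial (a - 2) < b.descFactorial a := by
  obtain ⟨m, rfl⟩ : ∃ m, a = m + 3 := ⟨a - 3, by omega⟩
  obtain ⟨k, rfl⟩ : ∃ k, b = 2 * m + 6 + k := ⟨b - (2 * m + 6), by omega⟩
  set b := 2 * m + 6 + k with hb
  have h1 : (m + 3) - 2 = m + 1 := by omega
  rw [h1]
  have h2 : (b + 1).descFactorial (m + 1) = (b + 1) * b.descFactorial m := by
    simpa using Nat.succ_descFactorial_succ b m
  have h3 : b.descFactorial (m + 3)
      = (b - (m + 2)) * ((b - (m + 1)) * ((b - m) * b.descFactorial m)) := by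
    rw [Nat.descFactorial_succ, Nat.descFactorial_succ, Nat.descFactorial_succ]
  rw [h2, h3]
  have hD : 0 < b.descFactorial m := Nat.pos_of_ne_zero fun h => by
    have := Nat.descFactorial_eq_zero_iff_lt.mp h; omega
  have hc : 2 * ((m + 3).choose 2) = (m + 3) * (m + 2) := by
    rw [Nat.choose_two_right]
    have h4 : (m + 3) - 1 = m + 2 := by omega
    rw [h4, Nat.mul_div_cancel']
    rw [Nat.mul_comm]
    exact (Nat.even_mul_succ_self (m + 2)).two_dvd
  have hs1 : b - (m + 2) = m + 4 + k := by omega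
  have hs2 : b - (m + 1) = m + 5 + k := by omega
  have hs3 : b - m = m + 6 + k := by omega
  rw [hs1, hs2, hs3]
  have key : (m + 3).choose 2 * (b + 1) < (m + 4 + k) * ((m + 5 + k) * (m + 6 + k)) := by
    have hbe : b + 1 = 2 * m + 7 + k := by omega
    rw [hbe]
    have h5 : 2 * ((m + 3).choose 2 * (2 * m + 7 + k))
        = (m + 3) * (m + 2) * (2 * m + 7 + k) := by rw [← Nat.mul_assoc, hc]
    nlinarith [h5, sq_nonneg (m + k), sq_nonneg m, sq_nonneg k]
  calc (m + 3).choose 2 * ((b + 1) * b.descFactorial m)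
      = ((m + 3).choose 2 * (b + 1)) * b.descFactorial m := by ring
    _ < ((m + 4 + k) * ((m + 5 + k) * (m + 6 + k))) * b.descFactorial m :=
        (Nat.mul_lt_mul_right hD).mpr key
    _ = (m + 4 + k) * ((m + 5 + k) * ((m + 6 + k) * b.descFactorial m)) := by ring
end

section
/- Let a, b be natural numbers with 2 < a and 2a ≤ b. Then (b+1)^{\underline{a}} + a·(b+1)^{\underline{a-1}} + a·(b+1) + 1 < 4·b^{\underline{a}}. -/
theorem stmt_6 (a b : ℕ) (ha : 2 < a) (hab : 2 * a ≤ b) :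
    (b + 1).descFactorial a + a * (b + 1).descFactorial (a - 1) + a * (b + 1) + 1 <
      4 * b.descFactorial a := by
  obtain ⟨k, rfl⟩ : ∃ k, a = k + 3 := ⟨a - 3, by omega⟩
  obtain ⟨c, rfl⟩ : ∃ c, b = 2 * k + 6 + c := ⟨b - (2 * k + 6), by omega⟩
  set n := 2 * k + 6 + c with hn
  have hF : k + 6 + c ≤ n.descFactorial (k + 1) := by
    calc k + 6 + c ≤ (k + 6 + c) ^ (k + 1) := Nat.le_self_pow (by omega) _
    _ = (n + 1 - (k + 1)) ^ (k + 1) := by congr 1; omega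
    _ ≤ n.descFactorial (k + 1) := Nat.pow_sub_le_descFactorial n (k + 1)
  set F := n.descFactorial (k + 1) with hFdef
  have e1 : (n + 1).descFactorial (k + 3) = (n + 1) * ((k + 5 + c) * F) := by
    rw [Nat.succ_descFactorial_succ, Nat.descFactorial_succ]
    congr 2
    omega
  have e2 : k + 3 - 1 = k + 2 := by omega
  have e3 : (n + 1).descFactorial (k + 2) = (n + 1) * F := by
    rw [Nat.succ_descFactorial_succ]
  have e4 : n.descFactorial (k + 3) = (k + 4 + c) * ((k + 5 + c) * F) := by
    rw [Nat.descFactorial_succ, Nat.descFactorial_succ]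
    congr 2
    · omega
    · omega
  rw [e2, e1, e3, e4, hn]
  have key := Nat.mul_le_mul_left (6 * k + 24 + (4 * k + 21) * c + 3 * c ^ 2) hF
  ring_nf at key ⊢
  nlinarith [key]
end

section
/- Let a, b be integers with 0 ≤ a ≤ b-1 and 3a ≤ 2b. Then ∑_{l=0}^{a} C(a,l)·(b+1)^{\underline{l}} < (b+1)·b^{\underline{a}}. -/
lemma core_ineq (m a : ℕ) (hm : 3 ≤ m) (ha : a ≤ 2 * m - 4) :
    (m + 1) ^ a < (m - 1) * m ^ a := by
  rcases lt_or_ge m 9 with h9 | h9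
  · interval_cases m <;> interval_cases a <;> norm_num
  · -- real-number route
    have hm0 : (0 : ℝ) < (m : ℝ) := by positivity
    have hmain : ((m : ℝ) + 1) ^ a < ((m : ℝ) - 1) * (m : ℝ) ^ a := by
      have h1 : (m : ℝ) + 1 ≤ Real.exp (1 / m) * m := by
        have := Real.add_one_le_exp (1 / (m : ℝ))
        have h2 : (1 / (m : ℝ) + 1) * m ≤ Real.exp (1 / m) * m := by
          apply mul_le_mul_of_nonneg_right this hm0.le
        calc (m : ℝ) + 1 = (1 / (m : ℝ) + 1) * m := by field_simp; ring
          _ ≤ _ := h2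
      have h2 : ((m : ℝ) + 1) ^ a ≤ Real.exp (a / m) * m ^ a := by
        calc ((m : ℝ) + 1) ^ a ≤ (Real.exp (1 / m) * m) ^ a := by
              apply pow_le_pow_left₀ (by positivity) h1
          _ = Real.exp (1 / m) ^ a * m ^ a := mul_pow _ _ _
          _ = Real.exp (a / m) * m ^ a := by
              rw [← Real.exp_nat_mul]; ring_nf
      have h3 : Real.exp ((a : ℝ) / m) ≤ Real.exp 2 := by
        apply Real.exp_le_exp.mpr
        rw [div_le_iff₀ hm0]
        have : (a : ℝ) ≤ 2 * m := by exact_mod_cast le_trans ha (by omega)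
        linarith
      have h4 : Real.exp 2 < 8 := by
        have h5 := Real.exp_one_lt_d9
        have : Real.exp 2 = Real.exp 1 * Real.exp 1 := by
          rw [← Real.exp_add]; norm_num
        nlinarith [Real.exp_pos 1]
      have h8 : (8 : ℝ) ≤ (m : ℝ) - 1 := by
        have : (9 : ℝ) ≤ (m : ℝ) := by exact_mod_cast h9
        linarith
      calc ((m : ℝ) + 1) ^ a ≤ Real.exp (a / m) * m ^ a := h2
        _ ≤ Real.exp 2 * m ^ a := by
            apply mul_le_mul_of_nonneg_right h3 (by positivity)
        _ < ((m : ℝ) - 1) * m ^ a := by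
            apply mul_lt_mul_of_pos_right (lt_of_lt_of_le h4 h8) (by positivity)
    have hcast : ((m : ℝ) - 1) = ((m - 1 : ℕ) : ℝ) := by
      rw [Nat.cast_sub (by omega)]; norm_num
    rw [hcast] at hmain
    exact_mod_cast hmain

theorem stmt_7 (a b : ℕ) (hab : a + 1 ≤ b) (h3 : 3 * a ≤ 2 * b) :
    ∑ l ∈ Finset.range (a + 1), a.choose l * (b + 1).descFactorial l <
      (b + 1) * b.descFactorial a := by
  set m := b + 2 - a with hm_def
  set D := (b + 1).descFactorial a with hD_def
  have hm3 : 3 ≤ m := by omega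
  have ha2m : a ≤ 2 * m - 4 := by omega
  -- step 1: per-term bound
  have step1 : ∀ l ∈ Finset.range (a + 1),
      (b + 1).descFactorial l * m ^ (a - l) ≤ D := by
    intro l hl
    rw [Finset.mem_range] at hl
    have hla : l ≤ a := by omega
    rw [hD_def, ← Nat.descFactorial_mul_descFactorial hla (n := b + 1)]
    rw [Nat.mul_comm ((b+1).descFactorial l)]
    apply Nat.mul_le_mul_right
    have := Nat.pow_sub_le_descFactorial (b + 1 - l) (a - l)
    have heq : b + 1 - l + 1 - (a - l) = m := by omega
    rwa [heq] at this
  -- step 2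
  have step2 : (∑ l ∈ Finset.range (a + 1), a.choose l * (b + 1).descFactorial l) * m ^ a
      ≤ D * (m + 1) ^ a := by
    rw [Finset.sum_mul]
    have hexp : (m + 1) ^ a = ∑ l ∈ Finset.range (a + 1), a.choose l * m ^ l := by
      rw [add_pow]
      apply Finset.sum_congr rfl
      intro l hl
      simp [Nat.mul_comm]
    rw [hexp, Finset.mul_sum]
    apply Finset.sum_le_sum
    intro l hl
    rw [Finset.mem_range] at hl
    have hla : l ≤ a := by omega
    have : m ^ a = m ^ (a - l) * m ^ l := by
      rw [← pow_add]
      congr 1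
      omega
    rw [this, Nat.mul_assoc, ← Nat.mul_assoc ((b+1).descFactorial l)]
    calc a.choose l * ((b + 1).descFactorial l * m ^ (a - l) * m ^ l)
        ≤ a.choose l * (D * m ^ l) := by
          apply Nat.mul_le_mul_left
          exact Nat.mul_le_mul_right _ (step1 l (Finset.mem_range.mpr hl))
      _ = D * (a.choose l * m ^ l) := by ring
  -- step 3
  have hDpos : 0 < D := by
    have := Nat.pow_sub_le_descFactorial (b + 1) a
    have h1 : 0 < (b + 1 + 1 - a) ^ a := Nat.pow_pos (by omega)
    omega
  have step3 : D * (m + 1) ^ a < D * ((m - 1) * m ^ a) :=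
    Nat.mul_lt_mul_of_le_of_lt (le_refl D) (core_ineq m a hm3 ha2m) hDpos
  -- RHS identification
  have hRHS2 : (b + 1) * b.descFactorial a = (m - 1) * D := by
    rw [hD_def, ← Nat.succ_descFactorial_succ, Nat.descFactorial_succ]
    congr 1
    omega
  rw [hRHS2]
  have hfinal : (∑ l ∈ Finset.range (a + 1), a.choose l * (b + 1).descFactorial l) * m ^ a
      < (m - 1) * D * m ^ a := by
    calc _ ≤ D * (m + 1) ^ a := step2
      _ < D * ((m - 1) * m ^ a) := step3
      _ = (m - 1) * D * m ^ a := by ring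
  exact Nat.lt_of_mul_lt_mul_right hfinal
end

section
/- Let m, n be natural numbers with 3 < m and 3m ≤ 2n. Then ∑_{i=2}^{m} C(m,i)·(n-1)^{\underline{m-i}} < C(m,2)·(n-1)^{\underline{m-1}}. -/
theorem stmt_8 (m n : ℕ) (hm : 3 < m) (hmn : 3 * m ≤ 2 * n) :
    ∑ i ∈ Finset.Icc 2 m, m.choose i * (n - 1).descFactorial (m - i) <
      m.choose 2 * (n - 1).descFactorial (m - 1) := by
  set a : ℕ → ℕ := fun i => m.choose i * (n - 1).descFactorial (m - i) with ha
  have hnm : m + 2 ≤ n := by omega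
  -- decomposition of terms
  have hstep : ∀ i, 2 ≤ i → i < m →
      (i + 1) * a (i + 1) = m.choose i * ((m - i) * (n - 1).descFactorial (m - i - 1)) ∧
      a i = m.choose i * ((n - m + i) * (n - 1).descFactorial (m - i - 1)) := by
    intro i h2 hi
    have e1 : m - (i + 1) = m - i - 1 := by omega
    have e2 : m - i = (m - i - 1) + 1 := by omega
    have e3 : n - 1 - (m - i - 1) = n - m + i := by omega
    constructor
    · have h1 : m.choose (i + 1) * (i + 1) = m.choose i * (m - i) :=
        Nat.choose_succ_right_eq m i
      simp only [ha, e1]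
      calc (i + 1) * (m.choose (i + 1) * (n - 1).descFactorial (m - i - 1))
          = (m.choose (i + 1) * (i + 1)) * (n - 1).descFactorial (m - i - 1) := by ring
        _ = m.choose i * ((m - i) * (n - 1).descFactorial (m - i - 1)) := by rw [h1]; ring
    · obtain ⟨k, hk⟩ : ∃ k, m - i = k + 1 := ⟨m - i - 1, by omega⟩
      have ek : m - i - 1 = k := by omega
      have e4 : n - 1 - k = n - m + i := by omega
      simp only [ha]
      rw [hk, Nat.descFactorial_succ, e4]
      simp
  have ratio3 : ∀ i, 2 ≤ i → 3 * a (i + 1) ≤ 2 * a i := by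
    intro i h2
    rcases lt_or_ge i m with hi | hi
    · obtain ⟨e1, e2⟩ := hstep i h2 hi
      have hc : m + 2 * i ≤ 2 * (n - m + i) := by omega
      have c1 : 3 * (m - i) ≤ 2 * ((i + 1) * (n - m + i)) := by
        calc 3 * (m - i) ≤ 3 * (m + 2 * i) := by omega
          _ ≤ (i + 1) * (m + 2 * i) := Nat.mul_le_mul_right _ (by omega)
          _ ≤ (i + 1) * (2 * (n - m + i)) := Nat.mul_le_mul_left _ hc
          _ = 2 * ((i + 1) * (n - m + i)) := by ring
      have key : (i + 1) * (3 * a (i + 1)) ≤ (i + 1) * (2 * a i) := by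
        calc (i + 1) * (3 * a (i + 1)) = 3 * ((i + 1) * a (i + 1)) := by ring
          _ = (3 * (m - i)) * (m.choose i * (n - 1).descFactorial (m - i - 1)) := by
              rw [e1]; ring
          _ ≤ (2 * ((i + 1) * (n - m + i))) * (m.choose i * (n - 1).descFactorial (m - i - 1)) :=
              Nat.mul_le_mul_right _ c1
          _ = (i + 1) * (2 * a i) := by rw [e2]; ring
      exact Nat.le_of_mul_le_mul_left key (by omega)
    · have hz : m.choose (i + 1) = 0 := Nat.choose_eq_zero_of_lt (by omega)
      simp [ha, hz]
  have ratio2 : ∀ i, 3 ≤ i → 2 * a (i + 1) ≤ a i := by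
    intro i h3
    rcases lt_or_ge i m with hi | hi
    · obtain ⟨e1, e2⟩ := hstep i (by omega) hi
      have hc : m + 2 * i ≤ 2 * (n - m + i) := by omega
      have c1 : 2 * (2 * (m - i)) ≤ 2 * ((i + 1) * (n - m + i)) := by
        calc 2 * (2 * (m - i)) ≤ 4 * (m + 2 * i) := by omega
          _ ≤ (i + 1) * (m + 2 * i) := Nat.mul_le_mul_right _ (by omega)
          _ ≤ (i + 1) * (2 * (n - m + i)) := Nat.mul_le_mul_left _ hc
          _ = 2 * ((i + 1) * (n - m + i)) := by ring
      have c2 : 2 * (m - i) ≤ (i + 1) * (n - m + i) := by omega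
      have key : (i + 1) * (2 * a (i + 1)) ≤ (i + 1) * a i := by
        calc (i + 1) * (2 * a (i + 1)) = 2 * ((i + 1) * a (i + 1)) := by ring
          _ = (2 * (m - i)) * (m.choose i * (n - 1).descFactorial (m - i - 1)) := by
              rw [e1]; ring
          _ ≤ ((i + 1) * (n - m + i)) * (m.choose i * (n - 1).descFactorial (m - i - 1)) :=
              Nat.mul_le_mul_right _ c2
          _ = (i + 1) * a i := by rw [e2]; ring
      exact Nat.le_of_mul_le_mul_left key (by omega)
    · have hz : m.choose (i + 1) = 0 := Nat.choose_eq_zero_of_lt (by omega)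
      simp [ha, hz]
  -- geometric sum bound
  have hsum : ∀ j, 3 ≤ j → (∑ i ∈ Finset.Icc 3 j, a i) + a j ≤ 2 * a 3 := by
    intro j hj
    induction j, hj using Nat.le_induction with
    | base => simp [Finset.Icc_self]; omega
    | succ j hj ih =>
      rw [Finset.sum_Icc_succ_top (by omega)]
      have h1 := ratio2 j hj
      omega
  -- split off the first term
  have hins : Finset.Icc 2 m = insert 2 (Finset.Icc 3 m) := by
    ext x; simp; omega
  have hsplit : ∑ i ∈ Finset.Icc 2 m, a i = a 2 + ∑ i ∈ Finset.Icc 3 m, a i := by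
    rw [hins, Finset.sum_insert (by simp)]
  -- the right-hand side
  have hRHS : m.choose 2 * (n - 1).descFactorial (m - 1) = (n - m + 1) * a 2 := by
    have e2 : m - 1 = (m - 2) + 1 := by omega
    have e3 : n - 1 - (m - 2) = n - m + 1 := by omega
    simp only [ha]
    rw [e2, Nat.descFactorial_succ, e3]; ring
  have ha2pos : 0 < a 2 := by
    simp only [ha]
    have hd : (n - 1).descFactorial (m - 2) ≠ 0 := by
      rw [Ne, Nat.descFactorial_eq_zero_iff_lt]; omega
    exact Nat.mul_pos (Nat.choose_pos (by omega)) (Nat.pos_of_ne_zero hd)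
  have hS : (∑ i ∈ Finset.Icc 3 m, a i) ≤ 2 * a 3 := by
    have := hsum m (by omega); omega
  have h33 : 3 * a 3 ≤ 2 * a 2 := ratio3 2 le_rfl
  have h3 : 3 ≤ n - m + 1 := by omega
  have hmul : 3 * a 2 ≤ (n - m + 1) * a 2 := Nat.mul_le_mul_right _ h3
  have hfin : 3 * (a 2 + ∑ i ∈ Finset.Icc 3 m, a i) < 3 * ((n - m + 1) * a 2) := by
    have : 3 * (∑ i ∈ Finset.Icc 3 m, a i) ≤ 6 * a 3 := by omega
    omega
  rw [hsplit, hRHS] at *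
  exact Nat.lt_of_mul_lt_mul_left hfin
end

section
/- Let a, b be natural numbers with 3 ≤ a and 3a ≤ 2b. Then 3·C(a,3)·(b+1)^{\underline{a-3}} ≤ 4·(b+1)^{\underline{a}} (that is, C(a,3)·(b+1)^{\underline{a-3}} ≤ (4/3)·(b+1)^{\underline{a}}). -/
lemma df_split (n m k : ℕ) :
    n.descFactorial (m + k) = n.descFactorial m * (n - m).descFactorial k := by
  induction k with
  | zero => simp
  | succ k ih =>
      rw [Nat.add_succ, Nat.descFactorial_succ, ih, Nat.descFactorial_succ, Nat.sub_sub]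
      ring

theorem stmt_12 (a b : ℕ) (ha : 3 ≤ a) (hab : 3 * a ≤ 2 * b) :
    3 * (a.choose 3 * (b + 1).descFactorial (a - 3)) ≤ 4 * (b + 1).descFactorial a := by
  obtain ⟨d, rfl⟩ : ∃ d, a = d + 3 := ⟨a - 3, by omega⟩
  obtain ⟨e, he⟩ : ∃ e, b = e + d + 3 := ⟨b - d - 3, by omega⟩
  subst he
  have hde : d + 3 ≤ 2 * e := by omega
  have h1 : (e + d + 3 + 1).descFactorial (d + 3)
      = (e + d + 4).descFactorial d * (e + 4).descFactorial 3 := by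
    have := df_split (e + d + 4) d 3
    simpa [show e + d + 4 - d = e + 4 by omega, show e + d + 3 + 1 = e + d + 4 by omega] using this
  rw [h1]
  simp only [show e + d + 3 + 1 = e + d + 4 by omega, show d + 3 - 3 = d by omega]
  have hch : 3 * (d + 3).choose 3 * 2 = (d + 3).descFactorial 3 := by
    rw [Nat.descFactorial_eq_factorial_mul_choose]
    norm_num [Nat.factorial]
    ring
  have key : 3 * (d + 3).choose 3 ≤ 4 * (e + 4).descFactorial 3 := by
    have h2 : (d + 3).descFactorial 3 ≤ 8 * (e + 4).descFactorial 3 := by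
      simp [Nat.descFactorial]
      have p1 : d + 1 ≤ 2 * (e + 2) := by omega
      have p2 : d + 2 ≤ 2 * (e + 3) := by omega
      have p3 : d + 3 ≤ 2 * (e + 4) := by omega
      calc (d + 1) * ((d + 2) * (d + 3))
          ≤ (2 * (e + 2)) * ((2 * (e + 3)) * (2 * (e + 4))) :=
            Nat.mul_le_mul p1 (Nat.mul_le_mul p2 p3)
        _ = 8 * ((e + 2) * ((e + 3) * (e + 4))) := by ring
    omega
  calc 3 * ((d + 3).choose 3 * (e + d + 4).descFactorial d)
      = (3 * (d + 3).choose 3) * (e + d + 4).descFactorial d := by ring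
    _ ≤ (4 * (e + 4).descFactorial 3) * (e + d + 4).descFactorial d :=
        Nat.mul_le_mul_right _ key
    _ = 4 * ((e + d + 4).descFactorial d * (e + 4).descFactorial 3) := by ring
end

section
/- Let a, b be natural numbers with 3a ≤ 2b and b - a ≥ 7. Then ∑_{l=0}^{a} C(a,l)·(b+1)^{\underline{l}} < (b-a+1)·(b+1)^{\underline{a}}. -/
lemma descFactorial_split (n l k : ℕ) :
    n.descFactorial (l + k) = (n - l).descFactorial k * n.descFactorial l := by
  induction k with
  | zero => simp
  | succ k ih =>
      rw [show l + (k + 1) = (l + k) + 1 from rfl, Nat.descFactorial_succ,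
        Nat.descFactorial_succ, ih, show n - (l + k) = n - l - k by omega]
      ring

lemma key_bound (a b l : ℕ) (hab : 3 * a ≤ 2 * b) (hla : l ≤ a) (hba : a ≤ b) :
    Nat.factorial (a - l) * (a.choose l * (b + 1).descFactorial l) ≤
      2 ^ (a - l) * (b + 1).descFactorial a := by
  set k := a - l with hk
  have h1 : a.choose l = a.choose k := (Nat.choose_symm hla).symm
  have h2 : Nat.factorial (a - l) * a.choose k = a.descFactorial k := by
    rw [Nat.descFactorial_eq_factorial_mul_choose]
  have h3 : (b + 1).descFactorial a = (b + 1 - l).descFactorial k * (b + 1).descFactorial l := by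
    rw [show a = l + k by omega, descFactorial_split]
  rw [h1, ← mul_assoc, h2, h3, ← mul_assoc]
  apply Nat.mul_le_mul_right
  calc a.descFactorial k ≤ a ^ k := Nat.descFactorial_le_pow a k
    _ ≤ (2 * (b + 1 - a)) ^ k := Nat.pow_le_pow_left (by omega) k
    _ = 2 ^ k * (b + 1 - a) ^ k := by rw [mul_pow]
    _ ≤ 2 ^ k * (b + 1 - l).descFactorial k := by
        apply Nat.mul_le_mul_left
        calc (b + 1 - a) ^ k ≤ (b - l + 1 - k) ^ k := by
              apply Nat.pow_le_pow_left; omega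
          _ ≤ (b - l).descFactorial k := Nat.pow_sub_le_descFactorial _ _
          _ ≤ (b + 1 - l).descFactorial k := by
              exact Nat.descFactorial_le _ (by omega)

theorem stmt_15 (a b : ℕ) (hab : 3 * a ≤ 2 * b) (h7 : a + 7 ≤ b) :
    ∑ l ∈ Finset.range (a + 1), a.choose l * (b + 1).descFactorial l <
      (b - a + 1) * (b + 1).descFactorial a := by
  have hba : a ≤ b := by omega
  set D := (b + 1).descFactorial a with hD
  have hDpos : 0 < D := Nat.pos_of_ne_zero (fun h => by have := Nat.descFactorial_eq_zero_iff_lt.mp h; omega)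
  -- move to ℝ
  rw [← Nat.cast_lt (α := ℝ)]
  push_cast
  have hterm : ∀ l ∈ Finset.range (a + 1),
      (a.choose l * (b + 1).descFactorial l : ℝ) ≤ (2:ℝ) ^ (a - l) / (Nat.factorial (a - l) : ℝ) * (D:ℝ) := by
    intro l hl
    rw [Finset.mem_range] at hl
    have hla : l ≤ a := by omega
    have := key_bound a b l hab hla hba
    have hfac : (0 : ℝ) < ((Nat.factorial (a - l)) : ℝ) := by positivity
    rw [div_mul_eq_mul_div, le_div_iff₀ hfac]
    calc (a.choose l * (b + 1).descFactorial l : ℝ) * Nat.factorial (a - l)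
        = ((Nat.factorial (a - l) * (a.choose l * (b + 1).descFactorial l) : ℕ) : ℝ) := by push_cast; ring
      _ ≤ ((2 ^ (a - l) * D : ℕ) : ℝ) := by exact_mod_cast Nat.cast_le.mpr this
      _ = 2 ^ (a - l) * (D : ℝ) := by push_cast; ring
  calc (∑ l ∈ Finset.range (a + 1), (a.choose l * (b + 1).descFactorial l : ℝ))
      ≤ ∑ l ∈ Finset.range (a + 1), (2:ℝ) ^ (a - l) / (Nat.factorial (a - l) : ℝ) * (D:ℝ) :=
        Finset.sum_le_sum hterm
    _ = (∑ l ∈ Finset.range (a + 1), (2 : ℝ) ^ (a - l) / Nat.factorial (a - l)) * D := by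
        rw [Finset.sum_mul]
    _ = (∑ k ∈ Finset.range (a + 1), (2 : ℝ) ^ k / Nat.factorial k) * D := by
        congr 1
        rw [← Finset.sum_range_reflect]
        apply Finset.sum_congr rfl
        intro j hj
        congr 2 <;> · rw [Finset.mem_range] at hj; congr 1; omega
    _ ≤ Real.exp 2 * D := by
        apply mul_le_mul_of_nonneg_right (Real.sum_le_exp_of_nonneg (by norm_num) _)
        positivity
    _ < 8 * D := by
        apply mul_lt_mul_of_pos_right _ (by exact_mod_cast hDpos)
        have h1 : Real.exp 1 < 2.7182818286 := Real.exp_one_lt_d9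
        have h2 : Real.exp 2 = Real.exp 1 * Real.exp 1 := by
          rw [← Real.exp_add]; norm_num
        nlinarith [Real.exp_pos 1]
    _ ≤ (((b - a : ℕ) : ℝ) + 1) * D := by
        apply mul_le_mul_of_nonneg_right _ (by positivity)
        have : (7 : ℕ) ≤ b - a := by omega
        have : (7 : ℝ) ≤ ((b - a : ℕ) : ℝ) := by exact_mod_cast this
        linarith
end
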